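/- Let q be a natural number, R ≥ 0, m : Fin q → ℝ with m_k ≥ 0 for all k, and for each k let f_k : ℝ → ℝ be continuous and strictly monotone increasing on [0, ∞). Let D = {X : Fin q → ℝ | X_k ≥ 0 for all k, Σ_k X_k = R, X_k ≤ m_k for all k}. Then the Beckmann potential Φ(X) = Σ_k ∫₀^{X_k} f_k(t) dt has at most one minimizer on D: if X, X' ∈ D both satisfy Φ(X) ≤ Φ(Y) and Φ(X') ≤ Φ(Y) for all Y ∈ D, then X = X'. -/

import Mathlib

lemma beckmann_strictConvex (f : ℝ → ℝ) (hcont : Continuous f)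
    (hmono : StrictMonoOn f (Set.Ici (0 : ℝ))) :
    StrictConvexOn ℝ (Set.Ici (0 : ℝ)) (fun x => ∫ t in (0:ℝ)..x, f t) := by
  apply StrictMonoOn.strictConvexOn_of_deriv (convex_Ici _)
  · exact fun x _ => (hcont.integral_hasStrictDerivAt 0 x).hasDerivAt.continuousAt.continuousWithinAt
  · intro a ha b hb hab
    rw [hcont.deriv_integral, hcont.deriv_integral]
    rw [interior_Ici] at ha hb
    exact hmono (Set.mem_Ici.mpr (le_of_lt (Set.mem_Ioi.mp ha))) (Set.mem_Ici.mpr (le_of_lt (Set.mem_Ioi.mp hb))) hab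

/-- Uniqueness of the minimizer of the Beckmann potential over the capacitated
feasible polytope, when each latency function is continuous and strictly
increasing on `[0, ∞)`. -/
theorem stmt_8 (q : ℕ) (R : ℝ) (hR : 0 ≤ R)
    (m : Fin q → ℝ) (hm : ∀ k, 0 ≤ m k)
    (f : Fin q → ℝ → ℝ)
    (hcont : ∀ k, Continuous (f k))
    (hmono : ∀ k, StrictMonoOn (f k) (Set.Ici (0 : ℝ)))
    (X X' : Fin q → ℝ)
    (hX : (∀ k, 0 ≤ X k) ∧ (∑ k, X k = R) ∧ (∀ k, X k ≤ m k))
    (hX' : (∀ k, 0 ≤ X' k) ∧ (∑ k, X' k = R) ∧ (∀ k, X' k ≤ m k))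
    (hXmin : ∀ Y : Fin q → ℝ, (∀ k, 0 ≤ Y k) → (∑ k, Y k = R) → (∀ k, Y k ≤ m k) →
      (∑ k, ∫ t in (0:ℝ)..X k, f k t) ≤ ∑ k, ∫ t in (0:ℝ)..Y k, f k t)
    (hX'min : ∀ Y : Fin q → ℝ, (∀ k, 0 ≤ Y k) → (∑ k, Y k = R) → (∀ k, Y k ≤ m k) →
      (∑ k, ∫ t in (0:ℝ)..X' k, f k t) ≤ ∑ k, ∫ t in (0:ℝ)..Y k, f k t) :
    X = X' := by
  by_contra hne
  obtain ⟨hX0, hXR, hXm⟩ := hX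
  obtain ⟨hX'0, hX'R, hX'm⟩ := hX'
  -- midpoint
  set Y : Fin q → ℝ := fun k => (X k + X' k) / 2 with hY
  have hY0 : ∀ k, 0 ≤ Y k := fun k => by
    have := hX0 k; have := hX'0 k; simp only [hY]; linarith
  have hYR : ∑ k, Y k = R := by
    simp only [hY]
    have : (∑ k, (X k + X' k) / 2) = ((∑ k, X k) + ∑ k, X' k) / 2 := by
      rw [← Finset.sum_div, Finset.sum_add_distrib]
    rw [this, hXR, hX'R]; ring
  have hYm : ∀ k, Y k ≤ m k := fun k => by
    have := hXm k; have := hX'm k; simp only [hY]; linarith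
  have hΦeq : (∑ k, ∫ t in (0:ℝ)..X k, f k t) = ∑ k, ∫ t in (0:ℝ)..X' k, f k t :=
    le_antisymm (hXmin X' hX'0 hX'R hX'm) (hX'min X hX0 hXR hXm)
  -- componentwise convexity
  have hconv : ∀ k, StrictConvexOn ℝ (Set.Ici (0 : ℝ)) (fun x => ∫ t in (0:ℝ)..x, f k t) :=
    fun k => beckmann_strictConvex (f k) (hcont k) (hmono k)
  obtain ⟨k₀, hk₀⟩ : ∃ k, X k ≠ X' k := by
    by_contra h; push_neg at h; exact hne (funext h)
  have hle : ∀ k ∈ Finset.univ, (∫ t in (0:ℝ)..Y k, f k t) ≤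
      (1/2) * (∫ t in (0:ℝ)..X k, f k t) + (1/2) * (∫ t in (0:ℝ)..X' k, f k t) := by
    intro k _
    have h := (hconv k).convexOn.2 (hX0 k) (hX'0 k) (by norm_num : (0:ℝ) ≤ 1/2)
      (by norm_num : (0:ℝ) ≤ 1/2) (by norm_num)
    simp only [smul_eq_mul] at h
    have : Y k = (1/2) * X k + (1/2) * X' k := by simp only [hY]; ring
    rw [this]; exact h
  have hlt : (∫ t in (0:ℝ)..Y k₀, f k₀ t) <
      (1/2) * (∫ t in (0:ℝ)..X k₀, f k₀ t) + (1/2) * (∫ t in (0:ℝ)..X' k₀, f k₀ t) := by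
    have h := (hconv k₀).2 (hX0 k₀) (hX'0 k₀) hk₀ (by norm_num : (0:ℝ) < 1/2)
      (by norm_num : (0:ℝ) < 1/2) (by norm_num)
    simp only [smul_eq_mul] at h
    have : Y k₀ = (1/2) * X k₀ + (1/2) * X' k₀ := by simp only [hY]; ring
    rw [this]; exact h
  have hsum : (∑ k, ∫ t in (0:ℝ)..Y k, f k t) <
      ∑ k, ((1/2) * (∫ t in (0:ℝ)..X k, f k t) + (1/2) * (∫ t in (0:ℝ)..X' k, f k t)) :=
    Finset.sum_lt_sum hle ⟨k₀, Finset.mem_univ k₀, hlt⟩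
  have hmin := hXmin Y hY0 hYR hYm
  rw [Finset.sum_add_distrib, ← Finset.mul_sum, ← Finset.mul_sum, ← hΦeq] at hsum
  linarith
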